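/- arXiv:2101.00498 — 5 statements merged into one kernel-verified Lean document; each statement's English description precedes it below -/
import Mathlib

section
/- Let X be a compact metric space, f : X → X a homeomorphism, and c > 0. If f is nonstandard expansive with constant c (i.e. for all distinct x, y ∈ X, the set {n ∈ ℤ : d(fⁿ(x), fⁿ(y)) > c} is infinite), then for every positive natural number k, f^k is nonstandard expansive with some constant c' > 0 (i.e. for all distinct x, y ∈ X, the set {m ∈ ℤ : d(f^{mk}(x), f^{mk}(y)) > c'} is infinite). -/
open Filter Topology

private lemma cont_zpow_nat {X : Type*} [TopologicalSpace X] (f : X ≃ X)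
    (hf : Continuous f) (j : ℕ) : Continuous ⇑(f ^ (j : ℤ)) := by
  induction j with
  | zero => simpa using continuous_id
  | succ n ih =>
      have hpow : f ^ ((n : ℤ) + 1) = f ^ (n : ℤ) * f := by
        rw [zpow_add_one]
      have : ⇑(f ^ (((n : ℕ) + 1 : ℕ) : ℤ)) = ⇑(f ^ (n : ℤ)) ∘ ⇑f := by
        push_cast
        rw [hpow]
        ext x
        simp [Equiv.Perm.mul_apply]
      rw [this]
      exact ih.comp hf

theorem stmt_4 {X : Type*} [MetricSpace X] [CompactSpace X]
    (f : X ≃ X) (hf : Continuous f) (hf' : Continuous f.symm)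
    (c : ℝ) (hc : 0 < c)
    (h : ∀ x y : X, x ≠ y → {n : ℤ | dist ((f ^ n) x) ((f ^ n) y) > c}.Infinite)
    (k : ℕ) (hk : 0 < k) :
    ∃ c' > 0, ∀ x y : X, x ≠ y →
      {m : ℤ | dist ((f ^ (m * (k : ℤ))) x) ((f ^ (m * (k : ℤ))) y) > c'}.Infinite := by
  -- uniform continuity of each f^j, j < k
  have hδ : ∀ j : ℕ, ∃ δ > 0, ∀ a b : X, dist a b < δ →
      dist ((f ^ (j : ℤ)) a) ((f ^ (j : ℤ)) b) < c := by
    intro j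
    have hu := CompactSpace.uniformContinuous_of_continuous (cont_zpow_nat f hf j)
    exact Metric.uniformContinuous_iff.mp hu c hc
  choose δ hδpos hδ using hδ
  have hne : (Finset.range k).Nonempty := Finset.nonempty_range_iff.mpr hk.ne'
  set δ₀ := (Finset.range k).inf' hne δ with hδ₀def
  have hδ₀pos : 0 < δ₀ := by
    rw [hδ₀def, Finset.lt_inf'_iff]
    intro j _
    exact hδpos j
  have hδ₀le : ∀ j < k, δ₀ ≤ δ j := by
    intro j hj
    exact Finset.inf'_le δ (Finset.mem_range.mpr hj)
  refine ⟨δ₀ / 2, by positivity, fun x y hxy => ?_⟩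
  by_contra hS
  rw [Set.not_infinite] at hS
  apply h x y hxy
  have hsub : {n : ℤ | dist ((f ^ n) x) ((f ^ n) y) > c} ⊆
      (fun p : ℤ × ℤ => p.1 * k + p.2) ''
        ({m : ℤ | dist ((f ^ (m * (k : ℤ))) x) ((f ^ (m * (k : ℤ))) y) > δ₀ / 2} ×ˢ
          Set.Ico (0 : ℤ) k) := by
    intro n hn
    have hk' : (0 : ℤ) < k := by exact_mod_cast hk
    have hmod0 : 0 ≤ n % k := Int.emod_nonneg n hk'.ne'
    have hmodk : n % k < k := Int.emod_lt_of_pos n hk'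
    refine ⟨(n / k, n % k), ⟨?_, hmod0, hmodk⟩, ?_⟩
    · -- n / k is in the set
      by_contra hm
      simp only [Set.mem_setOf_eq, not_lt] at hm
      set j : ℕ := (n % k).toNat with hjdef
      have hjk : j < k := by omega
      have hjcast : (j : ℤ) = n % k := Int.toNat_of_nonneg hmod0
      have hdist : dist ((f ^ (j : ℤ)) ((f ^ (n / k * (k : ℤ))) x))
          ((f ^ (j : ℤ)) ((f ^ (n / k * (k : ℤ))) y)) < c := by
        apply hδ j
        calc dist ((f ^ (n / k * (k : ℤ))) x) ((f ^ (n / k * (k : ℤ))) y)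
            ≤ δ₀ / 2 := hm
          _ < δ₀ := by linarith
          _ ≤ δ j := hδ₀le j hjk
      have heq : ∀ z : X, (f ^ (j : ℤ)) ((f ^ (n / k * (k : ℤ))) z) = (f ^ n) z := by
        intro z
        have : (j : ℤ) + n / k * (k : ℤ) = n := by
          rw [hjcast]
          have := Int.mul_ediv_add_emod n (k : ℤ)
          linarith
        have h2 : f ^ n = f ^ (j : ℤ) * f ^ (n / k * (k : ℤ)) := by
          rw [← zpow_add, this]
        rw [h2]
        simp [Equiv.Perm.mul_apply]
      rw [heq x, heq y] at hdist
      exact absurd hn (by simp only [Set.mem_setOf_eq, not_lt]; linarith)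
    · -- (n/k)*k + n%k = n
      have := Int.mul_ediv_add_emod n (k : ℤ)
      simp only
      linarith
  exact Set.Finite.subset ((hS.prod (Set.finite_Ico 0 (k : ℤ))).image _) hsub
end

section
/- Let X be a compact metric space and f : X → X a c-expansive homeomorphism such that no pair of distinct points x, y ∈ X is doubly asymptotic (i.e., it is never the case that d(fⁿ(x), fⁿ(y)) → 0 both as n → +∞ and as n → -∞). Then there exists c' > 0 such that for all distinct x, y ∈ X, the set {n ∈ ℤ : d(fⁿ(x), fⁿ(y)) > c'} is infinite. In fact one may take c' = c/2. -/
open Filter Topology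

private lemma cont_zpow {X : Type*} [MetricSpace X]
    (f : X ≃ X) (hf : Continuous f) (hf' : Continuous f.symm) :
    ∀ n : ℤ, Continuous ((f ^ n : X ≃ X) : X → X) := by
  intro n
  induction n using Int.induction_on with
  | zero => simpa using continuous_id
  | succ k ih =>
      have : ((f ^ ((k : ℤ) + 1) : X ≃ X) : X → X)
          = ((f ^ (k : ℤ) : X ≃ X) : X → X) ∘ f := by
        ext z; simp [zpow_add_one, Equiv.Perm.mul_apply]
      rw [this]; exact ih.comp hf
  | pred k ih =>
      have : ((f ^ (-(k : ℤ) - 1) : X ≃ X) : X → X)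
          = ((f ^ (-(k : ℤ)) : X ≃ X) : X → X) ∘ f.symm := by
        ext z
        rw [zpow_sub_one]
        rfl
      rw [this]; exact ih.comp hf'

private lemma key_tendsto {X : Type*} [MetricSpace X] [CompactSpace X]
    (f : X ≃ X) (hf : Continuous f) (hf' : Continuous f.symm)
    (c : ℝ) (hc : 0 < c)
    (hexp : ∀ x y : X, x ≠ y → ∃ n : ℤ, dist ((f ^ n) x) ((f ^ n) y) > c)
    (x y : X) (N : ℤ) (hN : ∀ n : ℤ, N ≤ n → dist ((f ^ n) x) ((f ^ n) y) ≤ c / 2) :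
    Tendsto (fun n : ℤ => dist ((f ^ n) x) ((f ^ n) y)) atTop (𝓝 0) := by
  by_contra h
  rw [Metric.tendsto_atTop] at h
  push_neg at h
  obtain ⟨ε, hε, hfreq⟩ := h
  have hfreq' : ∃ᶠ n in (atTop : Filter ℤ),
      ε ≤ dist ((f ^ n) x) ((f ^ n) y) := by
    rw [frequently_atTop]
    intro a
    obtain ⟨n, hn, hd⟩ := hfreq a
    refine ⟨n, hn, ?_⟩
    have := Real.dist_eq (dist ((f ^ n) x) ((f ^ n) y)) 0
    rw [Real.dist_eq, sub_zero, abs_of_nonneg dist_nonneg] at hd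
    linarith
  set L : Filter ℤ := atTop ⊓ 𝓟 {n : ℤ | ε ≤ dist ((f ^ n) x) ((f ^ n) y)} with hL
  have hLne : L.NeBot := frequently_iff_neBot.mp hfreq'
  set g : ℤ → X × X := fun n => ((f ^ n) x, (f ^ n) y) with hg
  have hFne : (Filter.map g L).NeBot := Filter.map_neBot
  obtain ⟨z, -, hz⟩ := isCompact_univ.exists_clusterPt
    (f := Filter.map g L) (le_principal_iff.mpr Filter.univ_mem)
  -- helper: membership in closed sets of the filter
  have hmem : ∀ s : Set (X × X), IsClosed s → s ∈ Filter.map g L → z ∈ s := by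
    intro s hcl hs
    have := mem_closure_iff_clusterPt.mpr (hz.mono (le_principal_iff.mpr hs))
    rwa [hcl.closure_eq] at this
  have hεz : ε ≤ dist z.1 z.2 := by
    have hcl : IsClosed {w : X × X | ε ≤ dist w.1 w.2} :=
      isClosed_le continuous_const
        (continuous_dist.comp ((continuous_fst).prodMk continuous_snd))
    have hs : {w : X × X | ε ≤ dist w.1 w.2} ∈ Filter.map g L := by
      rw [Filter.mem_map]
      exact mem_inf_of_right (by exact fun n hn => hn)
    exact hmem _ hcl hs
  have hzne : z.1 ≠ z.2 := by
    intro hzz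
    rw [hzz, dist_self] at hεz
    linarith
  have hbound : ∀ m : ℤ, dist ((f ^ m) z.1) ((f ^ m) z.2) ≤ c / 2 := by
    intro m
    have hcm := cont_zpow f hf hf' m
    have hcl : IsClosed {w : X × X | dist ((f ^ m) w.1) ((f ^ m) w.2) ≤ c / 2} :=
      isClosed_le (continuous_dist.comp
        ((hcm.comp continuous_fst).prodMk (hcm.comp continuous_snd)))
        continuous_const
    have hs : {w : X × X | dist ((f ^ m) w.1) ((f ^ m) w.2) ≤ c / 2}
        ∈ Filter.map g L := by
      rw [Filter.mem_map]
      refine mem_inf_of_left ?_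
      have : ∀ n : ℤ, N - m ≤ n → n ∈ g ⁻¹' {w : X × X |
          dist ((f ^ m) w.1) ((f ^ m) w.2) ≤ c / 2} := by
        intro n hn
        have key : ∀ w : X, (f ^ m) ((f ^ n) w) = (f ^ (m + n)) w := by
          intro w
          rw [zpow_add]
          rfl
        simp only [Set.mem_preimage, Set.mem_setOf_eq, hg, key]
        exact hN (m + n) (by omega)
      exact Filter.mem_of_superset (Filter.mem_atTop (N - m)) this
    exact hmem _ hcl hs
  obtain ⟨m, hm⟩ := hexp z.1 z.2 hzne
  have := hbound m
  linarith

theorem stmt_7 {X : Type*} [MetricSpace X] [CompactSpace X]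
    (f : X ≃ X) (hf : Continuous f) (hf' : Continuous f.symm)
    (c : ℝ) (hc : 0 < c)
    (hexp : ∀ x y : X, x ≠ y → ∃ n : ℤ, dist ((f ^ n) x) ((f ^ n) y) > c)
    (hnd : ∀ x y : X, x ≠ y →
      ¬ (Tendsto (fun n : ℤ => dist ((f ^ n) x) ((f ^ n) y)) atTop (𝓝 0) ∧
         Tendsto (fun n : ℤ => dist ((f ^ n) x) ((f ^ n) y)) atBot (𝓝 0))) :
    ∀ x y : X, x ≠ y →
      {n : ℤ | dist ((f ^ n) x) ((f ^ n) y) > c / 2}.Infinite := by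
  intro x y hxy
  by_contra hfin
  rw [Set.not_infinite] at hfin
  obtain ⟨a, ha⟩ := hfin.bddAbove
  obtain ⟨b, hb⟩ := hfin.bddBelow
  have hup : ∀ n : ℤ, a + 1 ≤ n → dist ((f ^ n) x) ((f ^ n) y) ≤ c / 2 := by
    intro n hn
    by_contra hd
    push_neg at hd
    have := ha hd
    omega
  have hdown : ∀ n : ℤ, n ≤ b - 1 → dist ((f ^ n) x) ((f ^ n) y) ≤ c / 2 := by
    intro n hn
    by_contra hd
    push_neg at hd
    have := hb hd
    omega
  have hTop : Tendsto (fun n : ℤ => dist ((f ^ n) x) ((f ^ n) y)) atTop (𝓝 0) :=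
    key_tendsto f hf hf' c hc hexp x y (a + 1) hup
  -- for atBot use f⁻¹
  have hinv : ∀ (n : ℤ) (w : X), ((f⁻¹ : X ≃ X) ^ n) w = (f ^ (-n)) w := by
    intro n w
    rw [inv_zpow, ← zpow_neg]
  have hexp' : ∀ x y : X, x ≠ y →
      ∃ n : ℤ, dist (((f⁻¹ : X ≃ X) ^ n) x) (((f⁻¹ : X ≃ X) ^ n) y) > c := by
    intro u v huv
    obtain ⟨n, hn⟩ := hexp u v huv
    exact ⟨-n, by simpa [hinv] using hn⟩
  have hdown' : ∀ n : ℤ, 1 - b ≤ n →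
      dist (((f⁻¹ : X ≃ X) ^ n) x) (((f⁻¹ : X ≃ X) ^ n) y) ≤ c / 2 := by
    intro n hn
    rw [hinv, hinv]
    exact hdown (-n) (by omega)
  have hTop' : Tendsto (fun n : ℤ =>
      dist (((f⁻¹ : X ≃ X) ^ n) x) (((f⁻¹ : X ≃ X) ^ n) y)) atTop (𝓝 0) :=
    key_tendsto (f⁻¹ : X ≃ X) hf' (by simpa [Equiv.Perm.inv_def] using hf) c hc hexp' x y (1 - b) hdown'
  have hBot : Tendsto (fun n : ℤ => dist ((f ^ n) x) ((f ^ n) y)) atBot (𝓝 0) := by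
    have h2 := hTop'.comp (tendsto_neg_atBot_atTop (G := ℤ))
    refine h2.congr fun n => ?_
    simp only [Function.comp_apply, hinv, neg_neg]
  exact hnd x y hxy ⟨hTop, hBot⟩
end

section
/- Let X be a compact metric space and f : X → X a homeomorphism. Then f is c-expansive without doubly asymptotic pairs of distinct points if and only if there exists c' > 0 such that for all distinct x, y ∈ X, the set {n ∈ ℤ : d(fⁿ(x), fⁿ(y)) > c'} is infinite. -/
open Filter Topology

private lemma cont_zpow8 {X : Type*} [TopologicalSpace X]
    (f : X ≃ X) (hf : Continuous f) (hf' : Continuous f.symm) (n : ℤ) :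
    Continuous ⇑(f ^ n) := by
  induction n using Int.induction_on with
  | zero => simpa using continuous_id
  | succ k ih =>
      have h : (f ^ ((k : ℤ) + 1)) = f ^ (k : ℤ) * f := zpow_add_one f k
      have : ⇑(f ^ ((k : ℤ) + 1)) = ⇑(f ^ (k : ℤ)) ∘ ⇑f := by rw [h]; rfl
      rw [this]; exact ih.comp hf
  | pred k ih =>
      have h : (f ^ (-(k : ℤ) - 1)) = f ^ (-(k : ℤ)) * f⁻¹ := zpow_sub_one f _
      have : ⇑(f ^ (-(k : ℤ) - 1)) = ⇑(f ^ (-(k : ℤ))) ∘ ⇑f.symm := by rw [h]; rfl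
      rw [this]; exact ih.comp hf' 

/-- Key lemma: eventual boundedness by c plus c-expansivity forces convergence to 0. -/
private lemma key8 {X : Type*} [MetricSpace X] [CompactSpace X]
    (f : X ≃ X) (hf : Continuous f) (hf' : Continuous f.symm) {c : ℝ}
    (hexp : ∀ x y : X, x ≠ y → ∃ n : ℤ, dist ((f ^ n) x) ((f ^ n) y) > c)
    (x y : X) (h : ∀ᶠ n : ℤ in atTop, dist ((f ^ n) x) ((f ^ n) y) ≤ c) :
    Tendsto (fun n : ℤ => dist ((f ^ n) x) ((f ^ n) y)) atTop (𝓝 0) := by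
  by_contra hcon
  rw [Metric.tendsto_atTop] at hcon
  push_neg at hcon
  obtain ⟨ε, hε, hfreq⟩ := hcon
  choose n hn hdn using fun N => hfreq N
  -- n : ℤ → ℤ, n N ≥ N, ε ≤ dist ...
  have hdn' : ∀ N : ℤ, ε ≤ dist ((f ^ n N) x) ((f ^ n N) y) := by
    intro N
    have := hdn N
    rwa [Real.dist_eq, sub_zero, abs_of_nonneg dist_nonneg] at this
  set m : ℕ → ℤ := fun k => n (k : ℤ) with hm
  have hmk : ∀ k : ℕ, (k : ℤ) ≤ m k := fun k => hn _
  have hmtop : Tendsto m atTop atTop :=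
    tendsto_atTop_mono hmk tendsto_natCast_atTop_atTop
  obtain ⟨⟨p, q⟩, -, φ, hφ, hconv⟩ :=
    IsCompact.tendsto_subseq (x := fun k => (((f ^ m k) x), ((f ^ m k) y)))
      isCompact_univ (fun k => Set.mem_univ _)
  have hp : Tendsto (fun k => (f ^ m (φ k)) x) atTop (𝓝 p) :=
    (continuous_fst.tendsto _).comp hconv
  have hq : Tendsto (fun k => (f ^ m (φ k)) y) atTop (𝓝 q) :=
    (continuous_snd.tendsto _).comp hconv
  have hpq : p ≠ q := by
    have hd : Tendsto (fun k => dist ((f ^ m (φ k)) x) ((f ^ m (φ k)) y)) atTop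
        (𝓝 (dist p q)) := hp.dist hq
    have : ε ≤ dist p q := ge_of_tendsto hd (Eventually.of_forall fun k => hdn' _)
    exact fun e => by rw [e, dist_self] at this; linarith
  have hmφtop : Tendsto (fun k => m (φ k)) atTop atTop :=
    hmtop.comp hφ.tendsto_atTop
  have hle : ∀ j : ℤ, dist ((f ^ j) p) ((f ^ j) q) ≤ c := by
    intro j
    have hcj := cont_zpow8 f hf hf' j
    have hd : Tendsto (fun k => dist ((f ^ j) ((f ^ m (φ k)) x)) ((f ^ j) ((f ^ m (φ k)) y)))
        atTop (𝓝 (dist ((f ^ j) p) ((f ^ j) q))) :=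
      ((hcj.tendsto p).comp hp).dist ((hcj.tendsto q).comp hq)
    refine le_of_tendsto hd ?_
    have htop : Tendsto (fun k => j + m (φ k)) atTop atTop :=
      tendsto_atTop_add_const_left _ j hmφtop
    have hev : ∀ᶠ k : ℕ in atTop,
        dist ((f ^ (j + m (φ k))) x) ((f ^ (j + m (φ k))) y) ≤ c := htop.eventually h
    refine hev.mono fun k hk => ?_
    simpa only [zpow_add, Equiv.Perm.mul_apply] using hk
  obtain ⟨j, hj⟩ := hexp p q hpq
  exact absurd (hle j) (by linarith)

theorem stmt_8 {X : Type*} [MetricSpace X] [CompactSpace X]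
    (f : X ≃ X) (hf : Continuous f) (hf' : Continuous f.symm) :
    ((∃ c > 0, ∀ x y : X, x ≠ y → ∃ n : ℤ, dist ((f ^ n) x) ((f ^ n) y) > c) ∧
      (∀ x y : X, x ≠ y →
        ¬ (Tendsto (fun n : ℤ => dist ((f ^ n) x) ((f ^ n) y)) atTop (𝓝 0) ∧
           Tendsto (fun n : ℤ => dist ((f ^ n) x) ((f ^ n) y)) atBot (𝓝 0)))) ↔
    (∃ c' > 0, ∀ x y : X, x ≠ y →
      {n : ℤ | dist ((f ^ n) x) ((f ^ n) y) > c'}.Infinite) := by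
  constructor
  · rintro ⟨⟨c, hc, hexp⟩, hnd⟩
    refine ⟨c, hc, fun x y hxy => ?_⟩
    by_contra hfin
    rw [Set.not_infinite] at hfin
    obtain ⟨A, hA⟩ := hfin.bddAbove
    obtain ⟨B, hB⟩ := hfin.bddBelow
    -- eventually at top the distance is ≤ c
    have hevT : ∀ᶠ n : ℤ in atTop, dist ((f ^ n) x) ((f ^ n) y) ≤ c := by
      filter_upwards [eventually_gt_atTop A] with n hn
      by_contra hgt
      exact absurd (hA (show n ∈ _ from lt_of_not_ge hgt)) (not_le.mpr hn)
    have hT : Tendsto (fun n : ℤ => dist ((f ^ n) x) ((f ^ n) y)) atTop (𝓝 0) :=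
      key8 f hf hf' hexp x y hevT
    -- now the atBot direction via g = f⁻¹
    set g : X ≃ X := f⁻¹ with hgdef
    have hgcoe : Continuous ⇑g := hf'
    have hgcoe' : Continuous ⇑g.symm := by
      have : g.symm = f := rfl
      rw [this]; exact hf
    have hgev : ∀ m : ℤ, ∀ z : X, (g ^ m) z = (f ^ (-m)) z := by
      intro m z
      rw [hgdef, inv_zpow, ← zpow_neg]
    have hgexp : ∀ p q : X, p ≠ q → ∃ n : ℤ, dist ((g ^ n) p) ((g ^ n) q) > c := by
      intro p q hpq
      obtain ⟨n, hn⟩ := hexp p q hpq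
      exact ⟨-n, by rw [hgev, hgev, neg_neg]; exact hn⟩
    have hevB : ∀ᶠ m : ℤ in atTop, dist ((g ^ m) x) ((g ^ m) y) ≤ c := by
      filter_upwards [eventually_gt_atTop (-B)] with m hm
      rw [hgev, hgev]
      by_contra hgt
      have hmem : -m ∈ {n : ℤ | dist ((f ^ n) x) ((f ^ n) y) > c} := lt_of_not_ge hgt
      have := hB hmem
      omega
    have hgT : Tendsto (fun m : ℤ => dist ((g ^ m) x) ((g ^ m) y)) atTop (𝓝 0) :=
      key8 g hgcoe hgcoe' hgexp x y hevB
    have hBt : Tendsto (fun n : ℤ => dist ((f ^ n) x) ((f ^ n) y)) atBot (𝓝 0) := by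
      rw [← map_neg_atTop, tendsto_map'_iff]
      have : ((fun n : ℤ => dist ((f ^ n) x) ((f ^ n) y)) ∘ Neg.neg)
          = fun m : ℤ => dist ((g ^ m) x) ((g ^ m) y) := by
        funext m; simp only [Function.comp_apply, hgev]
      rw [this]; exact hgT
    exact hnd x y hxy ⟨hT, hBt⟩
  · rintro ⟨c', hc', hinf⟩
    constructor
    · refine ⟨c', hc', fun x y hxy => ?_⟩
      obtain ⟨n, hn⟩ := (hinf x y hxy).nonempty
      exact ⟨n, hn⟩
    · rintro x y hxy ⟨h1, h2⟩
      have e1 : ∀ᶠ n : ℤ in atTop, dist ((f ^ n) x) ((f ^ n) y) < c' :=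
        h1.eventually (gt_mem_nhds hc')
      have e2 : ∀ᶠ n : ℤ in atBot, dist ((f ^ n) x) ((f ^ n) y) < c' :=
        h2.eventually (gt_mem_nhds hc')
      obtain ⟨A, hA⟩ := eventually_atTop.mp e1
      obtain ⟨B, hB⟩ := eventually_atBot.mp e2
      refine hinf x y hxy (Set.Finite.subset (Set.finite_Icc B A) fun n hn => ?_)
      constructor
      · by_contra h; exact absurd hn.out (not_lt.mpr (le_of_lt (hB n (by omega))))
      · by_contra h; exact absurd hn.out (not_lt.mpr (le_of_lt (hA n (by omega))))
end

section
/- Let X be a compact metric space, f : X → X a homeomorphism, and c > 0 such that for all distinct x, y ∈ X the set {n ∈ ℤ : d(fⁿ(x), fⁿ(y)) > c} is infinite. Then for every ε > 0 and every n ∈ ℕ, there exists m ∈ ℕ with m > n such that for all x, y ∈ X with d(x, y) > ε, there exists i ∈ ℤ with n < |i| < m and d(fⁱ(x), fⁱ(y)) > c. -/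
open Filter Topology

theorem stmt_9 {X : Type*} [MetricSpace X] [CompactSpace X]
    (f : X ≃ X) (hf : Continuous f) (hf' : Continuous f.symm)
    (c : ℝ) (hc : 0 < c)
    (h : ∀ x y : X, x ≠ y → {n : ℤ | dist ((f ^ n) x) ((f ^ n) y) > c}.Infinite) :
    ∀ ε > 0, ∀ n : ℕ, ∃ m : ℕ, m > n ∧ ∀ x y : X, dist x y > ε →
      ∃ i : ℤ, (n : ℤ) < |i| ∧ |i| < (m : ℤ) ∧ dist ((f ^ i) x) ((f ^ i) y) > c := by
  intro ε hε n
  have hcont : ∀ i : ℤ, Continuous ⇑(f ^ i) := by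
    intro i
    induction i using Int.induction_on with
    | zero => simpa using continuous_id
    | succ k ih =>
      rw [zpow_add_one, Equiv.Perm.coe_mul]
      exact ih.comp hf
    | pred k ih =>
      rw [zpow_sub_one, Equiv.Perm.coe_mul, Equiv.Perm.inv_def]
      exact ih.comp hf'
  set K : Set (X × X) := {p | ε ≤ dist p.1 p.2} with hK
  have hKc : IsCompact K :=
    (isClosed_le continuous_const (continuous_fst.dist continuous_snd)).isCompact
  have hopen : ∀ i : {i : ℤ // (n : ℤ) < |i|},
      IsOpen {p : X × X | dist ((f ^ i.1) p.1) ((f ^ i.1) p.2) > c} := by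
    intro i
    exact isOpen_lt continuous_const
      (((hcont i.1).comp continuous_fst).dist ((hcont i.1).comp continuous_snd))
  have hcover : K ⊆ ⋃ i : {i : ℤ // (n : ℤ) < |i|},
      {p : X × X | dist ((f ^ i.1) p.1) ((f ^ i.1) p.2) > c} := by
    rintro ⟨x, y⟩ hp
    have hne : x ≠ y := by
      intro hxy
      rw [hxy] at hp
      simp only [hK, Set.mem_setOf_eq, dist_self] at hp
      linarith
    have hfin : {i : ℤ | |i| ≤ (n : ℤ)}.Finite :=
      (Set.finite_Icc (-(n : ℤ)) n).subset (fun i hi => abs_le.mp hi)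
    obtain ⟨i, hi1, hi2⟩ := ((h x y hne).diff hfin).nonempty
    exact Set.mem_iUnion.mpr ⟨⟨i, lt_of_not_ge hi2⟩, hi1⟩
  obtain ⟨t, ht⟩ := hKc.elim_finite_subcover _ hopen hcover
  refine ⟨(t.sup fun i => i.1.natAbs) + n + 1, by omega, ?_⟩
  intro x y hxy
  have hp : (x, y) ∈ K := le_of_lt hxy
  obtain ⟨i, hit, hmem⟩ := Set.mem_iUnion₂.mp (ht hp)
  refine ⟨i.1, i.2, ?_, hmem⟩
  have hle : i.1.natAbs ≤ t.sup fun i => i.1.natAbs := Finset.le_sup (f := fun i => i.1.natAbs) hit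
  have := Int.abs_eq_natAbs i.1
  omega
end

section
/- Let X be a compact metric space, f : X → X a homeomorphism, and c > 0 such that for all distinct x, y ∈ X there exists n ∈ ℤ with d(fⁿ(x), fⁿ(y)) > c. Suppose x, y ∈ X are distinct and there exist sequences (n_k) in ℤ with |n_k| → ∞ and reals α > 0 with d(f^{n_k}(x), f^{n_k}(y)) > α for all k. Then the set {n ∈ ℤ : d(fⁿ(x), fⁿ(y)) > c/2} is infinite. -/
open Filter Topology

theorem stmt_15 {X : Type*} [MetricSpace X] [CompactSpace X]
    (f : X ≃ X) (hf : Continuous f) (hf' : Continuous f.symm)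
    (c : ℝ) (hc : 0 < c)
    (hexp : ∀ x y : X, x ≠ y → ∃ n : ℤ, dist ((f ^ n) x) ((f ^ n) y) > c)
    (x y : X) (hxy : x ≠ y)
    (hsep : ∃ n : ℕ → ℤ, ∃ α > (0 : ℝ),
      Tendsto (fun k : ℕ => |n k|) atTop atTop ∧
      ∀ k : ℕ, dist ((f ^ n k) x) ((f ^ n k) y) > α) :
    {n : ℤ | dist ((f ^ n) x) ((f ^ n) y) > c / 2}.Infinite := by
  obtain ⟨n, α, hα, hn, hd⟩ := hsep
  have hcont : ∀ m : ℤ, Continuous ⇑(f ^ m) := by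
    intro m
    induction m using Int.induction_on with
    | zero => simpa using continuous_id
    | succ k ih =>
        have h1 : (f ^ ((k : ℤ) + 1)) = f ^ (k : ℤ) * f := by rw [zpow_add_one]
        rw [h1]
        exact ih.comp hf
    | pred k ih =>
        have h1 : (f ^ (-(k : ℤ) - 1)) = f ^ (-(k : ℤ)) * f⁻¹ := by rw [zpow_sub_one]
        rw [h1]
        exact ih.comp hf'
  by_contra hfin
  rw [Set.not_infinite] at hfin
  obtain ⟨N, hN⟩ : ∃ N : ℤ, ∀ m ∈ {n : ℤ | dist ((f ^ n) x) ((f ^ n) y) > c / 2}, |m| ≤ N := by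
    obtain ⟨N, hN⟩ := (hfin.image (fun m => |m|)).bddAbove
    exact ⟨N, fun m hm => hN ⟨m, hm, rfl⟩⟩
  obtain ⟨⟨a, b⟩, -, φ, hφ, hlim⟩ :=
    isCompact_univ.tendsto_subseq (x := fun k => (((f ^ n k) x), ((f ^ n k) y)))
      (fun k => Set.mem_univ _)
  have hla : Tendsto (fun k => (f ^ n (φ k)) x) atTop (𝓝 a) :=
    (continuous_fst.tendsto (a, b)).comp hlim
  have hlb : Tendsto (fun k => (f ^ n (φ k)) y) atTop (𝓝 b) :=
    (continuous_snd.tendsto (a, b)).comp hlim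
  have hab : a ≠ b := by
    have hge : α ≤ dist a b :=
      ge_of_tendsto (hla.dist hlb) (Eventually.of_forall fun k => (hd (φ k)).le)
    intro h
    rw [h, dist_self] at hge
    linarith
  obtain ⟨m, hm⟩ := hexp a b hab
  have hmc : Tendsto (fun k => dist ((f ^ m) ((f ^ n (φ k)) x)) ((f ^ m) ((f ^ n (φ k)) y)))
      atTop (𝓝 (dist ((f ^ m) a) ((f ^ m) b))) :=
    ((((hcont m).tendsto a).comp hla).dist (((hcont m).tendsto b).comp hlb))
  have hev1 : ∀ᶠ k in atTop,
      dist ((f ^ (m + n (φ k))) x) ((f ^ (m + n (φ k))) y) > c / 2 := by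
    have h2 := hmc.eventually (eventually_gt_nhds
      (by linarith : c / 2 < dist ((f ^ m) a) ((f ^ m) b)))
    filter_upwards [h2] with k hk
    have e1 : (f ^ (m + n (φ k))) x = (f ^ m) ((f ^ n (φ k)) x) := by
      rw [zpow_add]; rfl
    have e2 : (f ^ (m + n (φ k))) y = (f ^ m) ((f ^ n (φ k)) y) := by
      rw [zpow_add]; rfl
    rw [e1, e2]
    exact hk
  have hev2 : ∀ᶠ k in atTop, N < |m + n (φ k)| := by
    have h1 : Tendsto (fun k => |n (φ k)|) atTop atTop := hn.comp hφ.tendsto_atTop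
    filter_upwards [h1.eventually_gt_atTop (N + |m|)] with k hk
    have h3 : |n (φ k)| = |m + n (φ k) - m| := by ring_nf
    have h4 : |m + n (φ k) - m| ≤ |m + n (φ k)| + |m| := abs_sub _ _
    linarith [h3 ▸ h4]
  obtain ⟨k, h1, h2⟩ := (hev1.and hev2).exists
  exact absurd (hN _ h1) (not_le.mpr h2)
end
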